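/- Let B be the backward shift on ℓ^p(ℕ, ω) with sup_n ω_n/ω_{n+1} < ∞. If there exist a bounded subset Γ of ℂ and a vector x ∈ ℓ^p(ℕ, ω) such that the projective-type orbit Orb(Γx, B) = {λ B^n x : λ ∈ Γ, n ∈ ℕ} has a non-zero norm limit point, then liminf_{n→∞} ω_n = 0 (i.e. B is hypercyclic). -/

import Mathlib

open MeasureTheory Filter Topology
open scoped ENNReal
noncomputable section

/-- The weighted measure on the index set `I` giving the point `k` mass `(ω k) ^ p`,
so that `Lp ℂ p (wMeasure p ω)` is the weighted sequence space `ℓ^p(I, ω)`. -/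
def wMeasure {I : Type*} [MeasurableSpace I] (p : ENNReal) (ω : I → ℝ) : Measure I :=
  Measure.sum (fun k => ENNReal.ofReal ((ω k) ^ p.toReal) • Measure.dirac k)

lemma wMeasure_singleton (p : ENNReal) (ω : ℕ → ℝ) (k : ℕ) :
    wMeasure p ω {k} = ENNReal.ofReal ((ω k) ^ p.toReal) := by
  rw [wMeasure, Measure.sum_apply _ (measurableSet_singleton k)]
  rw [tsum_eq_single k]
  · simp
  · intro i hi
    simp [Measure.dirac_apply, Set.indicator, hi]

lemma lintegral_wMeasure (p : ENNReal) (ω : ℕ → ℝ) (f : ℕ → ℝ≥0∞) :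
    ∫⁻ a, f a ∂(wMeasure p ω) = ∑' k, ENNReal.ofReal ((ω k)^p.toReal) * f k := by
  simp [wMeasure, lintegral_sum_measure, lintegral_smul_measure, lintegral_dirac]

/-- a.e. equality w.r.t. `wMeasure` is pointwise equality. -/
lemma ae_eq_pt (p : ENNReal) (ω : ℕ → ℝ) (hω : ∀ k, 0 < ω k) {f g : ℕ → ℂ}
    (h : f =ᵐ[wMeasure p ω] g) (k : ℕ) : f k = g k := by
  by_contra hne
  have hsub : {k} ⊆ {a | ¬ f a = g a} := by
    intro a ha; rcases ha with rfl; exact hne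
  have h0 : wMeasure p ω {k} = 0 :=
    measure_mono_null hsub (ae_iff.mp h)
  rw [wMeasure_singleton] at h0
  have : (0:ℝ) < (ω k) ^ p.toReal := Real.rpow_pos_of_pos (hω k) _
  simp [ENNReal.ofReal_eq_zero, not_le.mpr this] at h0

lemma coord_le (p : ENNReal) [Fact (1 ≤ p)] (hp : p ≠ ∞) (ω : ℕ → ℝ) (hω : ∀ k, 0 < ω k)
    (f : Lp ℂ p (wMeasure p ω)) (k : ℕ) : ‖f k‖ * ω k ≤ ‖f‖ := by
  have hp0 : p ≠ 0 := by
    have := Fact.out (p := 1 ≤ p); intro h; simp [h] at this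
  have hpr : 0 < p.toReal := ENNReal.toReal_pos hp0 hp
  have key : ENNReal.ofReal (‖f k‖ * ω k) ≤ eLpNorm f p (wMeasure p ω) := by
    rw [eLpNorm_eq_lintegral_rpow_enorm_toReal hp0 hp, lintegral_wMeasure]
    have h1 : ENNReal.ofReal ((ω k) ^ p.toReal) * (‖f k‖₊ : ℝ≥0∞) ^ p.toReal
        ≤ ∑' m, ENNReal.ofReal ((ω m)^p.toReal) * (‖f m‖₊ : ℝ≥0∞) ^ p.toReal :=
      ENNReal.le_tsum k
    have h2 : ENNReal.ofReal ((ω k) ^ p.toReal) * (‖f k‖₊ : ℝ≥0∞) ^ p.toReal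
        = (ENNReal.ofReal (‖f k‖ * ω k)) ^ p.toReal := by
      rw [ENNReal.ofReal_mul (norm_nonneg _), ← ENNReal.ofReal_rpow_of_pos (hω k),
        ENNReal.mul_rpow_of_nonneg _ _ hpr.le, mul_comm, ofReal_norm, enorm_eq_nnnorm]
    calc ENNReal.ofReal (‖f k‖ * ω k)
        = ((ENNReal.ofReal (‖f k‖ * ω k)) ^ p.toReal) ^ (1 / p.toReal) := by
          rw [← ENNReal.rpow_mul, mul_one_div, div_self hpr.ne', ENNReal.rpow_one]
      _ ≤ _ := by
          apply ENNReal.rpow_le_rpow _ (by positivity)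
          rw [← h2]; exact h1
  have := ENNReal.toReal_mono (Lp.eLpNorm_ne_top f) key
  rwa [ENNReal.toReal_ofReal (mul_nonneg (norm_nonneg _) (hω k).le), ← Lp.norm_def] at this

set_option maxHeartbeats 1000000 in
theorem stmt7 (p : ENNReal) [Fact (1 ≤ p)] (hp : p ≠ ∞) (ω : ℕ → ℝ) (hω : ∀ k, 0 < ω k)
    (hbdd : ∃ C : ℝ, ∀ n, ω n / ω (n + 1) ≤ C)
    (B : Lp ℂ p (wMeasure p ω) →L[ℂ] Lp ℂ p (wMeasure p ω))
    (hB : ∀ (x : Lp ℂ p (wMeasure p ω)) (k : ℕ), B x k = x (k + 1))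
    (Γ : Set ℂ) (hΓ : Bornology.IsBounded Γ)
    (x : Lp ℂ p (wMeasure p ω))
    (lam : ℕ → ℂ) (hlam : ∀ k, lam k ∈ Γ)
    (n : ℕ → ℕ) (hn : StrictMono n)
    (y : Lp ℂ p (wMeasure p ω)) (hy : y ≠ 0)
    (hconv : Tendsto (fun k => lam k • (B ^ n k) x) atTop (nhds y)) :
    Filter.liminf ω Filter.atTop = 0 := by
  have hp0 : p ≠ 0 := by
    have := Fact.out (p := 1 ≤ p); intro h; simp [h] at this
  have hpr : 0 < p.toReal := ENNReal.toReal_pos hp0 hp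
  -- coordinates of powers of B
  have hpow : ∀ (m : ℕ) (u : Lp ℂ p (wMeasure p ω)) (k : ℕ), ((B ^ m) u) k = u (k + m) := by
    intro m
    induction m with
    | zero => intro u k; rw [pow_zero, ContinuousLinearMap.one_apply, Nat.add_zero]
    | succ m ih =>
      intro u k
      rw [pow_succ', ContinuousLinearMap.mul_apply, hB, ih]
      congr 1; omega
  -- a nonzero coordinate of y
  obtain ⟨j, hj⟩ : ∃ j, y j ≠ 0 := by
    by_contra h
    push_neg at h
    exact hy (Lp.eq_zero_iff_ae_eq_zero.mpr (Filter.Eventually.of_forall h))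
  -- bound on Γ
  obtain ⟨M0, hM0⟩ := isBounded_iff_forall_norm_le.mp hΓ
  set M : ℝ := max M0 1 with hMdef
  have hM1 : 0 < M := lt_of_lt_of_le one_pos (le_max_right _ _)
  have hM : ∀ k, ‖lam k‖ ≤ M := fun k => le_trans (hM0 _ (hlam k)) (le_max_left _ _)
  -- coordinate convergence at j
  set c : ℕ → ℂ := fun k => lam k * x (j + n k) with hc
  have hcoord : Tendsto (fun k => ‖c k - y j‖) atTop (𝓝 0) := by
    have hb : ∀ k, ‖c k - y j‖ ≤ ‖lam k • (B ^ n k) x - y‖ * (ω j)⁻¹ := by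
      intro k
      have hfj : ((lam k • (B ^ n k) x - y : Lp ℂ p (wMeasure p ω)) : ℕ → ℂ) j = c k - y j := by
        have h1 : ((lam k • (B ^ n k) x - y : Lp ℂ p (wMeasure p ω)) : ℕ → ℂ)
            =ᵐ[wMeasure p ω] (fun a => lam k * ((B ^ n k) x) a - y a) := by
          filter_upwards [Lp.coeFn_sub (lam k • (B ^ n k) x) y,
            Lp.coeFn_smul (lam k) ((B ^ n k) x)] with a h1 h2
          rw [h1, Pi.sub_apply, h2, Pi.smul_apply, smul_eq_mul]
        have := ae_eq_pt p ω hω h1 j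
        rw [this, hpow, hc]
      have := coord_le p hp ω hω (lam k • (B ^ n k) x - y) j
      rw [hfj] at this
      calc ‖c k - y j‖
          = (‖c k - y j‖ * ω j) * (ω j)⁻¹ := by
            rw [mul_assoc, mul_inv_cancel₀ (hω j).ne', mul_one]
        _ ≤ _ := mul_le_mul_of_nonneg_right this (inv_nonneg.mpr (hω j).le)
    have hnorm : Tendsto (fun k => ‖lam k • (B ^ n k) x - y‖ * (ω j)⁻¹) atTop (𝓝 0) := by
      have h0 : Tendsto (fun k => ‖lam k • (B ^ n k) x - y‖) atTop (𝓝 0) :=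
        tendsto_iff_norm_sub_tendsto_zero.mp hconv
      simpa using h0.mul_const (ω j)⁻¹
    exact squeeze_zero (fun k => norm_nonneg _) hb hnorm
  -- eventually the coordinates of x along j + n k are large
  set δ : ℝ := ‖y j‖ / (2 * M) with hδdef
  have hyj : 0 < ‖y j‖ := norm_pos_iff.mpr hj
  have hδ : 0 < δ := div_pos hyj (by linarith)
  have hlarge : ∀ᶠ k in atTop, δ ≤ ‖x (j + n k)‖ := by
    have hev : ∀ᶠ k in atTop, ‖c k - y j‖ < ‖y j‖ / 2 := by
      have := hcoord.eventually (eventually_lt_nhds (show (0:ℝ) < ‖y j‖/2 by linarith))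
      simpa using this
    filter_upwards [hev] with k hk
    have h1 : ‖y j‖ / 2 ≤ ‖c k‖ := by
      have := norm_sub_norm_le (y j) (c k)
      have h2 : ‖y j - c k‖ = ‖c k - y j‖ := norm_sub_rev _ _
      linarith [abs_le.mp (le_refl |‖y j‖ - ‖c k‖|)]
    have h2 : ‖c k‖ ≤ M * ‖x (j + n k)‖ := by
      rw [hc]
      simp only [norm_mul]
      exact mul_le_mul_of_nonneg_right (hM k) (norm_nonneg _)
    rw [hδdef, div_le_iff₀ (by linarith : (0:ℝ) < 2 * M)]
    calc ‖y j‖ ≤ 2 * ‖c k‖ := by linarith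
      _ ≤ 2 * (M * ‖x (j + n k)‖) := by linarith
      _ = ‖x (j + n k)‖ * (2 * M) := by ring
  -- the terms of the sum go to zero
  have hsum : (∑' m, ENNReal.ofReal ((ω m)^p.toReal) * (‖x m‖₊ : ℝ≥0∞) ^ p.toReal) ≠ ∞ := by
    intro htop
    have := Lp.eLpNorm_ne_top x
    rw [eLpNorm_eq_lintegral_rpow_enorm_toReal hp0 hp, lintegral_wMeasure] at this
    simp only [enorm_eq_nnnorm] at this
    rw [htop] at this
    rw [ENNReal.top_rpow_of_pos (by positivity)] at this
    exact this rfl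
  have hterm : Tendsto (fun m => ENNReal.ofReal ((ω m)^p.toReal) * (‖x m‖₊ : ℝ≥0∞) ^ p.toReal)
      atTop (𝓝 0) := ENNReal.tendsto_atTop_zero_of_tsum_ne_top hsum
  -- real version of the terms
  have htermR : Tendsto (fun m => (ω m)^p.toReal * ‖x m‖^p.toReal) atTop (𝓝 0) := by
    have hcont : Tendsto ENNReal.toReal (𝓝 0) (𝓝 0) := by
      have := (ENNReal.tendsto_toReal (a := 0) (by simp))
      simpa using this
    have := hcont.comp hterm
    convert this using 2 with m
    rw [Function.comp_apply, ENNReal.toReal_mul, ENNReal.toReal_ofReal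
      (Real.rpow_pos_of_pos (hω m) _).le]
    congr 1
    rw [← ENNReal.toReal_rpow]
    simp
  -- compose with the subsequence
  have hmk : Tendsto (fun k => j + n k) atTop atTop :=
    tendsto_atTop_mono (fun k => Nat.le_add_left (n k) j) hn.tendsto_atTop
  have htermSub : Tendsto (fun k => (ω (j + n k))^p.toReal * ‖x (j + n k)‖^p.toReal)
      atTop (𝓝 0) := htermR.comp hmk
  -- conclude ω (j + n k) ^ p.toReal → 0 by squeeze
  have hωpr : Tendsto (fun k => (ω (j + n k))^p.toReal) atTop (𝓝 0) := by
    have hub : ∀ᶠ k in atTop, (ω (j + n k))^p.toReal ≤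
        ((ω (j + n k))^p.toReal * ‖x (j + n k)‖^p.toReal) / δ ^ p.toReal := by
      filter_upwards [hlarge] with k hk
      rw [le_div_iff₀ (by positivity : (0:ℝ) < δ ^ p.toReal)]
      exact mul_le_mul_of_nonneg_left (Real.rpow_le_rpow hδ.le hk hpr.le)
        (Real.rpow_pos_of_pos (hω _) _).le
    have hD : Tendsto (fun k => ((ω (j + n k))^p.toReal * ‖x (j + n k)‖^p.toReal) / δ ^ p.toReal)
        atTop (𝓝 0) := by simpa using htermSub.div_const (δ ^ p.toReal)
    exact squeeze_zero' (Filter.Eventually.of_forall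
      (fun k => (Real.rpow_pos_of_pos (hω _) _).le)) hub hD
  -- hence ω (j + n k) → 0
  have hωsub : Tendsto (fun k => ω (j + n k)) atTop (𝓝 0) := by
    have hcont : Tendsto (fun s : ℝ => s ^ (1 / p.toReal)) (𝓝 0) (𝓝 0) := by
      have h := (Real.continuousAt_rpow_const 0 (1/p.toReal) (Or.inr (by positivity))).tendsto
      rwa [Real.zero_rpow (by positivity : (1:ℝ)/p.toReal ≠ 0)] at h
    have heq : (fun k => ω (j + n k))
        = (fun s : ℝ => s ^ (1/p.toReal)) ∘ (fun k => (ω (j + n k))^p.toReal) := by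
      funext k
      simp only [Function.comp_apply]
      rw [← Real.rpow_mul (hω _).le, mul_one_div, div_self hpr.ne', Real.rpow_one]
    rw [heq]
    exact hcont.comp hωpr
  -- liminf
  have hfreq : ∀ ε : ℝ, 0 < ε → ∃ᶠ m in atTop, ω m ≤ ε := by
    intro ε hε
    have hev : ∀ᶠ k in atTop, ω (j + n k) ≤ ε := by
      have := hωsub.eventually (eventually_le_nhds hε)
      simpa using this
    exact hmk.frequently hev.frequently
  have hbd : IsBoundedUnder (· ≥ ·) atTop ω := ⟨0, Filter.eventually_map.mpr
    (Filter.Eventually.of_forall (fun m => (hω m).le))⟩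
  have hle : liminf ω atTop ≤ 0 := by
    apply le_of_forall_pos_le_add
    intro ε hε
    have := liminf_le_of_frequently_le (hfreq ε hε) hbd
    linarith
  have hge : (0:ℝ) ≤ liminf ω atTop := by
    apply le_liminf_of_le
    · exact IsCoboundedUnder.of_frequently_le (hfreq 1 one_pos)
    · exact Filter.Eventually.of_forall (fun m => (hω m).le)
  linarith
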